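/- Let α, β, γ, δ > 0 and let r, σ be real exponents with 4 < r and 4 < σ. Define Ψ(s) = (α/2) e^{2s} + (β/4) e^{4s} − γ e^{r s} − δ e^{σ s} for s ∈ ℝ. Then Ψ has a unique critical point t̄ ∈ ℝ, which is its strict global maximum point, with Ψ(t̄) > 0; Ψ is strictly increasing on (−∞, t̄] and strictly decreasing on [t̄, +∞); and Ψ′(0) < 0 if and only if t̄ < 0. -/

import Mathlib

open Real Filter

/-- for `α, β, γ, δ > 0` and exponents `r, σ > 4`, the fiber map
`Ψ(s) = (α/2)e^{2s} + (β/4)e^{4s} − γ e^{rs} − δ e^{σs}` has a unique critical point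
`t̄ ∈ ℝ`, which is its strict global maximum with `Ψ(t̄) > 0`; `Ψ` is strictly increasing
on `(−∞, t̄]`, strictly decreasing on `[t̄, ∞)`, and `Ψ′(0) < 0 ↔ t̄ < 0`. -/
theorem stmt_16 (α β γ δ r σ : ℝ)
    (hα : 0 < α) (hβ : 0 < β) (hγ : 0 < γ) (hδ : 0 < δ)
    (hr : 4 < r) (hσ : 4 < σ)
    (Ψ : ℝ → ℝ)
    (hΨ : ∀ s, Ψ s = α / 2 * Real.exp (2 * s) + β / 4 * Real.exp (4 * s)
      - γ * Real.exp (r * s) - δ * Real.exp (σ * s)) :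
    ∃ tbar : ℝ,
      (∀ s, deriv Ψ s = 0 ↔ s = tbar) ∧
      0 < Ψ tbar ∧
      (∀ s, s ≠ tbar → Ψ s < Ψ tbar) ∧
      StrictMonoOn Ψ (Set.Iic tbar) ∧
      StrictAntiOn Ψ (Set.Ici tbar) ∧
      (deriv Ψ 0 < 0 ↔ tbar < 0) := by
  have hΨfun : Ψ = fun s => α / 2 * Real.exp (2 * s) + β / 4 * Real.exp (4 * s)
      - γ * Real.exp (r * s) - δ * Real.exp (σ * s) := funext hΨ
  set g : ℝ → ℝ := fun s => α * Real.exp (-2*s) + β - γ*r*Real.exp ((r-4)*s)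
      - δ*σ*Real.exp ((σ-4)*s) with hg
  have hexp : ∀ (c x : ℝ), HasDerivAt (fun s => Real.exp (c*s)) (c * Real.exp (c*x)) x := by
    intro c x
    simpa [mul_comm, Function.comp_def] using (Real.hasDerivAt_exp (c*x)).comp x ((hasDerivAt_id x).const_mul c)
  have hD : ∀ x, HasDerivAt Ψ (Real.exp (4*x) * g x) x := by
    intro x
    have h := ((((hexp 2 x).const_mul (α/2)).add ((hexp 4 x).const_mul (β/4))).sub
      ((hexp r x).const_mul γ)).sub ((hexp σ x).const_mul δ)
    rw [hΨfun]
    convert h using 1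
    rotate_left 3
    have e1 : Real.exp (4*x) * Real.exp (-2*x) = Real.exp (2*x) := by
      rw [← Real.exp_add]; ring_nf
    have e2 : Real.exp (4*x) * Real.exp ((r-4)*x) = Real.exp (r*x) := by
      rw [← Real.exp_add]; ring_nf
    have e3 : Real.exp (4*x) * Real.exp ((σ-4)*x) = Real.exp (σ*x) := by
      rw [← Real.exp_add]; ring_nf
    simp only [hg]
    linear_combination α * e1 - γ*r*e2 - δ*σ*e3
    all_goals rfl
  have hderiv : ∀ x, deriv Ψ x = Real.exp (4*x) * g x := fun x => (hD x).deriv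
  have hganti : StrictAnti g := by
    intro x y hxy
    have e1 : Real.exp (-2*y) < Real.exp (-2*x) := Real.exp_lt_exp.2 (by linarith)
    have e2 : Real.exp ((r-4)*x) < Real.exp ((r-4)*y) := Real.exp_lt_exp.2 (by nlinarith)
    have e3 : Real.exp ((σ-4)*x) < Real.exp ((σ-4)*y) := Real.exp_lt_exp.2 (by nlinarith)
    have h1 := mul_lt_mul_of_pos_left e1 hα
    have h2 := mul_lt_mul_of_pos_left e2 (mul_pos hγ (by linarith : (0:ℝ) < r))
    have h3 := mul_lt_mul_of_pos_left e3 (mul_pos hδ (by linarith : (0:ℝ) < σ))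
    simp only [hg]
    linarith
  have hcg : Continuous g := by rw [hg]; fun_prop
  have h0 : ∀ c : ℝ, 0 < c → Tendsto (fun s => Real.exp (c*s)) atBot (nhds 0) :=
    fun c hc => Real.tendsto_exp_atBot.comp (tendsto_id.const_mul_atBot hc)
  -- point where g < 0
  have hA : Tendsto (fun s => γ*r*Real.exp ((r-4)*s)) atTop atTop :=
    (Real.tendsto_exp_atTop.comp (tendsto_id.const_mul_atTop (by linarith : (0:ℝ) < r-4))).const_mul_atTop
      (mul_pos hγ (by linarith))
  have hbot : Tendsto (fun s => α + β - γ*r*Real.exp ((r-4)*s)) atTop atBot := by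
    have := tendsto_atBot_add_const_left atTop (α+β) (tendsto_neg_atTop_atBot.comp hA)
    refine this.congr fun s => by simp [sub_eq_add_neg]
  obtain ⟨b, hb⟩ := ((hbot.eventually (eventually_lt_atBot 0)).and (eventually_ge_atTop (0:ℝ))).exists
  have hgb : g b < 0 := by
    have h1 : Real.exp (-2*b) ≤ 1 := Real.exp_le_one_iff.2 (by linarith [hb.2])
    have h2 : 0 < δ*σ*Real.exp ((σ-4)*b) := by positivity
    have := hb.1
    simp only [hg]
    nlinarith [mul_le_mul_of_nonneg_left h1 hα.le]
  -- point where g > 0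
  have hA2 : Tendsto (fun s => α * Real.exp (-2*s)) atBot atTop := by
    have h1 : Tendsto (fun s : ℝ => -2*s) atBot atTop := by
      have hn : Tendsto (fun s : ℝ => -s) atBot atTop := tendsto_neg_atBot_atTop
      have := hn.const_mul_atTop (by norm_num : (0:ℝ) < 2)
      refine this.congr fun s => by ring
    exact (Real.tendsto_exp_atTop.comp h1).const_mul_atTop hα
  have hB2 : Tendsto (fun s => β - γ*r*Real.exp ((r-4)*s) - δ*σ*Real.exp ((σ-4)*s)) atBot
      (nhds (β - γ*r*0 - δ*σ*0)) :=
    (tendsto_const_nhds.sub ((h0 (r-4) (by linarith)).const_mul (γ*r))).sub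
      ((h0 (σ-4) (by linarith)).const_mul (δ*σ))
  have htop : Tendsto g atBot atTop := by
    have := hA2.atTop_add hB2
    refine this.congr fun s => by simp only [hg]; ring
  obtain ⟨a, ha⟩ := (htop.eventually (eventually_gt_atTop 0)).exists
  have hab : a < b := hganti.lt_iff_gt.mp (by linarith)
  obtain ⟨t, htmem, ht⟩ := intermediate_value_Icc' hab.le hcg.continuousOn ⟨hgb.le, ha.le⟩
  -- sign facts
  have hpos : ∀ s, s < t → 0 < deriv Ψ s := by
    intro s hs
    rw [hderiv]
    exact mul_pos (Real.exp_pos _) (by have := hganti hs; rw [ht] at this; exact this)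
  have hneg : ∀ s, t < s → deriv Ψ s < 0 := by
    intro s hs
    rw [hderiv]
    exact mul_neg_of_pos_of_neg (Real.exp_pos _) (by have := hganti hs; rw [ht] at this; exact this)
  have hzero : ∀ s, deriv Ψ s = 0 ↔ s = t := by
    intro s
    constructor
    · intro h
      rcases lt_trichotomy s t with h' | h' | h'
      · exact absurd h (hpos s h').ne'
      · exact h'
      · exact absurd h (hneg s h').ne
    · rintro rfl
      rw [hderiv, ht, mul_zero]
  have hcont : Continuous Ψ := by rw [hΨfun]; fun_prop
  have hmono : StrictMonoOn Ψ (Set.Iic t) := by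
    apply strictMonoOn_of_deriv_pos (convex_Iic t) hcont.continuousOn
    intro x hx
    rw [interior_Iic] at hx
    exact hpos x hx
  have hanti : StrictAntiOn Ψ (Set.Ici t) := by
    apply strictAntiOn_of_deriv_neg (convex_Ici t) hcont.continuousOn
    intro x hx
    rw [interior_Ici] at hx
    exact hneg x hx
  have hmax : ∀ s, s ≠ t → Ψ s < Ψ t := by
    intro s hs
    rcases lt_or_gt_of_ne hs with h | h
    · exact hmono (Set.mem_Iic.2 h.le) (Set.mem_Iic.2 le_rfl) h
    · exact hanti (Set.mem_Ici.2 le_rfl) (Set.mem_Ici.2 h.le) h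
  -- positivity of Ψ t
  have hh : Tendsto (fun s => α/2 + β/4*Real.exp (2*s) - γ*Real.exp ((r-2)*s)
      - δ*Real.exp ((σ-2)*s)) atBot (nhds (α/2 + β/4*0 - γ*0 - δ*0)) :=
    ((tendsto_const_nhds.add ((h0 2 two_pos).const_mul (β/4))).sub
      ((h0 (r-2) (by linarith)).const_mul γ)).sub ((h0 (σ-2) (by linarith)).const_mul δ)
  have hh' : Tendsto (fun s => α/2 + β/4*Real.exp (2*s) - γ*Real.exp ((r-2)*s)
      - δ*Real.exp ((σ-2)*s)) atBot (nhds (α/2)) := by simpa using hh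
  obtain ⟨s0, hs0⟩ := (hh'.eventually (eventually_gt_nhds (by positivity : (0:ℝ) < α/2))).exists
  have hΨs0 : 0 < Ψ s0 := by
    have e1 : Real.exp (2*s0) * Real.exp (2*s0) = Real.exp (4*s0) := by
      rw [← Real.exp_add]; ring_nf
    have e2 : Real.exp (2*s0) * Real.exp ((r-2)*s0) = Real.exp (r*s0) := by
      rw [← Real.exp_add]; ring_nf
    have e3 : Real.exp (2*s0) * Real.exp ((σ-2)*s0) = Real.exp (σ*s0) := by
      rw [← Real.exp_add]; ring_nf
    have heq : Ψ s0 = Real.exp (2*s0) * (α/2 + β/4*Real.exp (2*s0) - γ*Real.exp ((r-2)*s0)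
        - δ*Real.exp ((σ-2)*s0)) := by
      rw [hΨ s0]
      linear_combination -(β/4)*e1 + γ*e2 + δ*e3
    rw [heq]
    exact mul_pos (Real.exp_pos _) hs0
  have hΨt : 0 < Ψ t := by
    rcases eq_or_ne s0 t with rfl | h
    · exact hΨs0
    · exact lt_trans hΨs0 (hmax s0 h)
  refine ⟨t, hzero, hΨt, hmax, hmono, hanti, ?_⟩
  constructor
  · intro h
    rcases lt_trichotomy t 0 with h' | h' | h'
    · exact h'
    · exfalso; have h0' := (hzero 0).2 h'.symm; linarith
    · exact absurd h (not_lt.2 (hpos 0 h').le)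
  · exact hneg 0
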